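/- Suppose the fading random variable X has density f_X(u) = Σ_{i=1}^N w_i f^G(k_i, Ω_i; u) where each f^G is a Gamma density with shape k_i and mean Ω_i, the w_i are nonnegative and sum to 1. Let ξ be inverse gamma with shape m > 1 and mean 1, independent of X. Then W = ξ X has density f_W(u) = Σ_{i=1}^N w_i f^F(m, k_i, Ω_i; u), a finite mixture of Fisher–Snedecor F densities. -/

import Mathlib

open MeasureTheory Set

/-- Gamma density with shape k and mean Ω. -/
noncomputable def fG (k Ω y : ℝ) : ℝ :=
  k ^ k / (Real.Gamma k * Ω ^ k) * y ^ (k - 1) * Real.exp (-k * y / Ω)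

/-- Beta function. -/
noncomputable def realBeta (a b : ℝ) : ℝ := Real.Gamma a * Real.Gamma b / Real.Gamma (a + b)

/-- Fisher–Snedecor F density with shadowing shape m, fading shape k and mean Ω. -/
noncomputable def fF (m k Ω t : ℝ) : ℝ :=
  (m - 1) ^ m * k ^ k / realBeta m k * (t ^ (k - 1) * Ω ^ m / ((m - 1) * Ω + k * t) ^ (m + k))

lemma integrable_aux {s b : ℝ} (hs : -1 < s) (hb : 0 < b) :
    IntegrableOn (fun t : ℝ => t ^ s * Real.exp (-(b * t))) (Ioi 0) := by
  have := integrableOn_rpow_mul_exp_neg_mul_rpow (p := 1) hs one_pos hb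
  refine this.congr_fun (fun t ht => ?_) measurableSet_Ioi
  simp only [Real.rpow_one, neg_mul]

lemma hcongr_lem (m k Ω : ℝ) (hm : 1 < m) (hk : 0 < k) (hΩ : 0 < Ω) (u : ℝ) (hu : 0 < u) :
    ∀ t ∈ Ioi (0:ℝ),
      t * fG k Ω (u * t) * ((m - 1) ^ m / Real.Gamma m * t ^ (m - 1) * Real.exp (-(m - 1) * t))
        = (k ^ k / (Real.Gamma k * Ω ^ k) * u ^ (k - 1) * ((m - 1) ^ m / Real.Gamma m)) *
            (t ^ (k + m - 1) * Real.exp (-((k * u / Ω + (m - 1)) * t))) := by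
  intro t ht
  have ht0 : (0:ℝ) < t := ht
  rw [fG, Real.mul_rpow hu.le ht0.le]
  rw [show k + m - 1 = (k - 1) + 1 + (m - 1) by ring,
    Real.rpow_add ht0, Real.rpow_add ht0, Real.rpow_one]
  have hexp : -((k * u / Ω + (m - 1)) * t) = -k * (u * t) / Ω + -(m - 1) * t := by ring
  rw [hexp, Real.exp_add]
  ring

lemma integrable_term (m k Ω : ℝ) (hm : 1 < m) (hk : 0 < k) (hΩ : 0 < Ω) (u : ℝ) (hu : 0 < u) :
    IntegrableOn (fun t => t * fG k Ω (u * t) *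
        ((m - 1) ^ m / Real.Gamma m * t ^ (m - 1) * Real.exp (-(m - 1) * t))) (Ioi (0:ℝ)) := by
  have hm0 : (0:ℝ) < m - 1 := by linarith
  have ha0 : (0:ℝ) < k * u / Ω + (m - 1) := by positivity
  have h : IntegrableOn (fun t : ℝ =>
      (k ^ k / (Real.Gamma k * Ω ^ k) * u ^ (k - 1) * ((m - 1) ^ m / Real.Gamma m)) *
        (t ^ (k + m - 1) * Real.exp (-((k * u / Ω + (m - 1)) * t)))) (Ioi 0) := by
    exact (integrable_aux (by linarith : (-1:ℝ) < k + m - 1) ha0).const_mul _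
  exact h.congr_fun (fun t ht => (hcongr_lem m k Ω hm hk hΩ u hu t ht).symm) measurableSet_Ioi

lemma key (m k Ω : ℝ) (hm : 1 < m) (hk : 0 < k) (hΩ : 0 < Ω) (u : ℝ) (hu : 0 < u) :
    ∫ t in Ioi (0:ℝ), t * fG k Ω (u * t) *
        ((m - 1) ^ m / Real.Gamma m * t ^ (m - 1) * Real.exp (-(m - 1) * t)) = fF m k Ω u := by
  have hm0 : (0:ℝ) < m - 1 := by linarith
  set a : ℝ := k * u / Ω + (m - 1) with ha
  have ha0 : 0 < a := by positivity
  have hcongr := hcongr_lem m k Ω hm hk hΩ u hu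
  rw [setIntegral_congr_fun measurableSet_Ioi hcongr, integral_const_mul,
    Real.integral_rpow_mul_exp_neg_mul_Ioi (by positivity : (0:ℝ) < k + m) ha0]
  have hΩ0 : Ω ≠ 0 := hΩ.ne'
  have haeq : a = ((m - 1) * Ω + k * u) / Ω := by rw [ha]; field_simp; ring
  have hden : (0:ℝ) < (m - 1) * Ω + k * u := by positivity
  have h2 : (1 / a) ^ (k + m) = Ω ^ k * Ω ^ m / ((m - 1) * Ω + k * u) ^ (m + k) := by
    rw [haeq, one_div_div, Real.div_rpow hΩ.le (by positivity), add_comm k m,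
      Real.rpow_add hΩ, mul_comm (Ω ^ m)]
  rw [h2, fF, realBeta, add_comm k m]
  have hΓk := Real.Gamma_pos_of_pos hk
  have hΓm := Real.Gamma_pos_of_pos (by linarith : (0:ℝ) < m)
  have hΓmk := Real.Gamma_pos_of_pos (by positivity : (0:ℝ) < m + k)
  have hΩk : (0:ℝ) < Ω ^ k := Real.rpow_pos_of_pos hΩ k
  have hD : (0:ℝ) < ((m - 1) * Ω + k * u) ^ (m + k) := Real.rpow_pos_of_pos hden _
  field_simp

/-- If the fading density is a finite mixture of Gamma densities, then the
inverse-gamma composite density is the corresponding mixture of F densities. -/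
theorem mixture_gamma_to_F (N : ℕ) (w k Ω : Fin N → ℝ) (m : ℝ) (hm : 1 < m)
    (hk : ∀ i, 0 < k i) (hΩ : ∀ i, 0 < Ω i) (hw0 : ∀ i, 0 ≤ w i) (hw1 : ∑ i, w i = 1)
    (fX : ℝ → ℝ) (hfX : ∀ x, fX x = ∑ i, w i * fG (k i) (Ω i) x)
    (u : ℝ) (hu : 0 < u) :
    ∫ t in Ioi (0:ℝ), t * fX (u * t) *
        ((m - 1) ^ m / Real.Gamma m * t ^ (m - 1) * Real.exp (-(m - 1) * t)) =
      ∑ i, w i * fF m (k i) (Ω i) u := by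
  have heq : ∀ t : ℝ, t * fX (u * t) *
        ((m - 1) ^ m / Real.Gamma m * t ^ (m - 1) * Real.exp (-(m - 1) * t)) =
      ∑ i, w i * (t * fG (k i) (Ω i) (u * t) *
        ((m - 1) ^ m / Real.Gamma m * t ^ (m - 1) * Real.exp (-(m - 1) * t))) := by
    intro t
    rw [hfX, Finset.mul_sum, Finset.sum_mul]
    exact Finset.sum_congr rfl fun i _ => by ring
  simp_rw [heq]
  rw [integral_finset_sum _ (fun i _ =>
    ((integrable_term m (k i) (Ω i) hm (hk i) (hΩ i) u hu).const_mul (w i)))]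
  refine Finset.sum_congr rfl fun i _ => ?_
  rw [integral_const_mul, key m (k i) (Ω i) hm (hk i) (hΩ i) u hu]
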